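/- arXiv:2409.19160 — 2 statements merged into one kernel-verified Lean document; each statement's English description precedes it below -/
import Mathlib

section
/- For every t ∈ ℝ, the limit as s → 0 (s ≠ 0) of G^B_{n_y n_y n_y}(γ(t), γ(t+s)) equals 3κ(t)/(8π), where for x ≠ γ(s′) one defines G^B_{n_y n_y n_y}(x, γ(s′)) = −(3/(4π))·(r·n(s′))/‖r‖² + (1/(2π))·(r·n(s′))³/‖r‖⁴ with r = x − γ(s′); this function is the third iterated directional derivative of y ↦ G^B(x,y), each derivative in the direction n(s′). -/
open Real Filter Topology MeasureTheory

noncomputable section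

/-- Euclidean dot product on `ℝ × ℝ`. -/
def dot2 (v w : ℝ × ℝ) : ℝ := v.1 * w.1 + v.2 * w.2

/-- Unit tangent vector `τ(s) = γ′(s)`. -/
def tang (γ : ℝ → ℝ × ℝ) (s : ℝ) : ℝ × ℝ := deriv γ s

/-- Unit normal vector `n(s) = (τ₂(s), −τ₁(s))`. -/
def nor (γ : ℝ → ℝ × ℝ) (s : ℝ) : ℝ × ℝ := ((deriv γ s).2, -(deriv γ s).1)

/-- Signed curvature `κ(s) = −γ″(s)·n(s)`. -/
def curv (γ : ℝ → ℝ × ℝ) (s : ℝ) : ℝ := -(dot2 (deriv (deriv γ) s) (nor γ s))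

/-- Explicit formula for `G^B_{n_y n_y n_y}(x, γ(s'))`, the third iterated directional
derivative of `y ↦ G^B(x,y)` in the direction `n(s')`, with `r = x − γ(s')`. -/
def GB_ny_ny_ny (γ : ℝ → ℝ × ℝ) (x : ℝ × ℝ) (s' : ℝ) : ℝ :=
  -(3 / (4 * π)) * dot2 (x - γ s') (nor γ s') / dot2 (x - γ s') (x - γ s')
    + 1 / (2 * π) * (dot2 (x - γ s') (nor γ s')) ^ 3 / (dot2 (x - γ s') (x - γ s')) ^ 2

private lemma hasDerivAt_fst' {f : ℝ → ℝ × ℝ} {f' : ℝ × ℝ} {x : ℝ}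
    (h : HasDerivAt f f' x) : HasDerivAt (fun w => (f w).1) f'.1 x := by
  simpa using h.hasFDerivAt.fst.hasDerivAt

private lemma hasDerivAt_snd' {f : ℝ → ℝ × ℝ} {f' : ℝ × ℝ} {x : ℝ}
    (h : HasDerivAt f f' x) : HasDerivAt (fun w => (f w).2) f'.2 x := by
  simpa using h.hasFDerivAt.snd.hasDerivAt

private lemma quad_limit (h h' : ℝ → ℝ) (c : ℝ)
    (hd1 : ∀ x, HasDerivAt h (h' x) x)
    (hd2 : HasDerivAt h' c 0)
    (h0 : h 0 = 0) (h1 : h' 0 = 0) :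
    Tendsto (fun s => h s / s ^ 2) (𝓝[≠] (0:ℝ)) (𝓝 (c / 2)) := by
  apply HasDerivAt.lhopital_zero_nhdsNE (f' := h') (g' := fun x => 2 * x)
  · exact Eventually.of_forall fun x => hd1 x
  · refine Eventually.of_forall fun x => ?_
    have := hasDerivAt_pow 2 x
    simpa using this
  · filter_upwards [self_mem_nhdsWithin] with x hx
    exact mul_ne_zero two_ne_zero hx
  · have := (hd1 0).continuousAt.tendsto
    rw [h0] at this
    exact this.mono_left nhdsWithin_le_nhds
  · have : Tendsto (fun s : ℝ => s ^ 2) (𝓝 0) (𝓝 0) := by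
      simpa using ((continuous_pow 2).tendsto (0:ℝ))
    exact this.mono_left nhdsWithin_le_nhds
  · have hs : Tendsto (slope h' 0) (𝓝[≠] (0:ℝ)) (𝓝 c) :=
      hasDerivAt_iff_tendsto_slope.mp hd2
    have h2 : Tendsto (fun x => slope h' 0 x / 2) (𝓝[≠] (0:ℝ)) (𝓝 (c / 2)) :=
      hs.div_const 2
    refine h2.congr' ?_
    filter_upwards [self_mem_nhdsWithin] with x hx
    simp only [slope, h1, vsub_eq_sub, sub_zero, smul_eq_mul]
    field_simp

/-- numerator `r·n` in components -/
private def ff (γ : ℝ → ℝ × ℝ) (t s : ℝ) : ℝ :=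
  ((γ t).1 - (γ (t+s)).1) * (deriv γ (t+s)).2 + ((γ t).2 - (γ (t+s)).2) * (-(deriv γ (t+s)).1)

private def gg (γ : ℝ → ℝ × ℝ) (t s : ℝ) : ℝ :=
  ((γ t).1 - (γ (t+s)).1) * ((γ t).1 - (γ (t+s)).1)
    + ((γ t).2 - (γ (t+s)).2) * ((γ t).2 - (γ (t+s)).2)

theorem stmt0 (L : ℝ) (hL : 0 < L) (γ : ℝ → ℝ × ℝ)
    (hγ : ContDiff ℝ (⊤ : ℕ∞) γ)
    (hper : ∀ s, γ (s + L) = γ s)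
    (hinj : Set.InjOn γ (Set.Ico 0 L))
    (harc : ∀ s, dot2 (deriv γ s) (deriv γ s) = 1)
    (t : ℝ) :
    Tendsto (fun s : ℝ => GB_ny_ny_ny γ (γ t) (t + s)) (𝓝[≠] (0 : ℝ))
      (𝓝 (3 * curv γ t / (8 * π))) := by
  have hπ : (π : ℝ) ≠ 0 := Real.pi_ne_zero
  have hγd : Differentiable ℝ γ := hγ.differentiable (by simp)
  have hγ1 : ContDiff ℝ (⊤ : ℕ∞) (deriv γ) := (contDiff_infty_iff_deriv.mp hγ).2
  have hγ1d : Differentiable ℝ (deriv γ) := hγ1.differentiable (by simp)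
  have hγ2 : ContDiff ℝ (⊤ : ℕ∞) (deriv (deriv γ)) := (contDiff_infty_iff_deriv.mp hγ1).2
  have hγ2d : Differentiable ℝ (deriv (deriv γ)) := hγ2.differentiable (by simp)
  have hw : ∀ s : ℝ, HasDerivAt (fun s : ℝ => t + s) 1 s := fun s => by
    simpa using (hasDerivAt_id s).const_add t
  -- component derivatives
  have hP : ∀ s, HasDerivAt (fun s => (γ (t+s)).1) ((deriv γ (t+s)).1) s := fun s => by
    simpa [Function.comp_def] using (hasDerivAt_fst' ((hγd (t+s)).hasDerivAt)).comp s (hw s)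
  have hQ : ∀ s, HasDerivAt (fun s => (γ (t+s)).2) ((deriv γ (t+s)).2) s := fun s => by
    simpa [Function.comp_def] using (hasDerivAt_snd' ((hγd (t+s)).hasDerivAt)).comp s (hw s)
  have hP1 : ∀ s, HasDerivAt (fun s => (deriv γ (t+s)).1) ((deriv (deriv γ) (t+s)).1) s :=
    fun s => by simpa [Function.comp_def] using (hasDerivAt_fst' ((hγ1d (t+s)).hasDerivAt)).comp s (hw s)
  have hQ1 : ∀ s, HasDerivAt (fun s => (deriv γ (t+s)).2) ((deriv (deriv γ) (t+s)).2) s :=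
    fun s => by simpa [Function.comp_def] using (hasDerivAt_snd' ((hγ1d (t+s)).hasDerivAt)).comp s (hw s)
  have hP2 : ∀ s, HasDerivAt (fun s => (deriv (deriv γ) (t+s)).1)
      ((deriv (deriv (deriv γ)) (t+s)).1) s :=
    fun s => by simpa [Function.comp_def] using (hasDerivAt_fst' ((hγ2d (t+s)).hasDerivAt)).comp s (hw s)
  have hQ2 : ∀ s, HasDerivAt (fun s => (deriv (deriv γ) (t+s)).2)
      ((deriv (deriv (deriv γ)) (t+s)).2) s :=
    fun s => by simpa [Function.comp_def] using (hasDerivAt_snd' ((hγ2d (t+s)).hasDerivAt)).comp s (hw s)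
  -- derivative of ff
  set ff' : ℝ → ℝ := fun s =>
    ((γ t).1 - (γ (t+s)).1) * (deriv (deriv γ) (t+s)).2
      - ((γ t).2 - (γ (t+s)).2) * (deriv (deriv γ) (t+s)).1 with hff'def
  have hffd : ∀ s, HasDerivAt (ff γ t) (ff' s) s := by
    intro s
    have h1 := (((hasDerivAt_const s (γ t).1).sub (hP s)).mul (hQ1 s)).add
      (((hasDerivAt_const s (γ t).2).sub (hQ s)).mul ((hP1 s).neg))
    refine h1.congr_deriv ?_
    simp only [hff'def, Pi.sub_apply, Pi.add_apply, Pi.mul_apply, Pi.neg_apply]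
    ring
  set ff'' : ℝ → ℝ := fun s =>
    -((deriv γ (t+s)).1 * (deriv (deriv γ) (t+s)).2)
      + ((γ t).1 - (γ (t+s)).1) * (deriv (deriv (deriv γ)) (t+s)).2
      + (deriv γ (t+s)).2 * (deriv (deriv γ) (t+s)).1
      - ((γ t).2 - (γ (t+s)).2) * (deriv (deriv (deriv γ)) (t+s)).1 with hff''def
  have hffd2 : ∀ s, HasDerivAt ff' (ff'' s) s := by
    intro s
    have h1 := ((((hasDerivAt_const s (γ t).1).sub (hP s)).mul (hQ2 s))).sub
      ((((hasDerivAt_const s (γ t).2).sub (hQ s)).mul (hP2 s)))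
    refine h1.congr_deriv ?_
    simp only [hff''def, Pi.sub_apply, Pi.add_apply, Pi.mul_apply, Pi.neg_apply]
    ring
  -- derivative of gg
  set gg' : ℝ → ℝ := fun s =>
    -(2 * (((γ t).1 - (γ (t+s)).1) * (deriv γ (t+s)).1))
      - 2 * (((γ t).2 - (γ (t+s)).2) * (deriv γ (t+s)).2) with hgg'def
  have hggd : ∀ s, HasDerivAt (gg γ t) (gg' s) s := by
    intro s
    have h1 := (((hasDerivAt_const s (γ t).1).sub (hP s)).mul
        ((hasDerivAt_const s (γ t).1).sub (hP s))).add
      ((((hasDerivAt_const s (γ t).2).sub (hQ s)).mul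
        ((hasDerivAt_const s (γ t).2).sub (hQ s))))
    refine h1.congr_deriv ?_
    simp only [hgg'def, Pi.sub_apply, Pi.add_apply, Pi.mul_apply, Pi.neg_apply]
    ring
  set gg'' : ℝ → ℝ := fun s =>
    2 * ((deriv γ (t+s)).1 * (deriv γ (t+s)).1)
      - 2 * (((γ t).1 - (γ (t+s)).1) * (deriv (deriv γ) (t+s)).1)
      + (2 * ((deriv γ (t+s)).2 * (deriv γ (t+s)).2)
      - 2 * (((γ t).2 - (γ (t+s)).2) * (deriv (deriv γ) (t+s)).2)) with hgg''def
  have hggd2 : ∀ s, HasDerivAt gg' (gg'' s) s := by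
    intro s
    have h1 := (((((hasDerivAt_const s (γ t).1).sub (hP s)).mul (hP1 s)).const_mul 2).neg).sub
      (((((hasDerivAt_const s (γ t).2).sub (hQ s)).mul (hQ1 s)).const_mul 2))
    refine h1.congr_deriv ?_
    simp only [hgg''def, Pi.sub_apply, Pi.add_apply, Pi.mul_apply, Pi.neg_apply]
    ring
  -- the two quadratic limits
  have hA : Tendsto (fun s => ff γ t s / s ^ 2) (𝓝[≠] (0:ℝ)) (𝓝 (-(curv γ t) / 2)) := by
    have hc : ff'' 0 = -(curv γ t) := by
      simp only [hff''def, add_zero, curv, dot2, nor]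
      ring
    have := quad_limit (ff γ t) ff' (ff'' 0) hffd (hffd2 0)
      (by simp [ff]) (by simp [hff'def])
    rwa [hc] at this
  have hB : Tendsto (fun s => gg γ t s / s ^ 2) (𝓝[≠] (0:ℝ)) (𝓝 1) := by
    have hc : gg'' 0 = 2 := by
      have h1 := harc t
      simp only [dot2] at h1
      simp only [hgg''def, add_zero, sub_self, mul_zero, sub_zero]
      nlinarith [h1]
    have := quad_limit (gg γ t) gg' (gg'' 0) hggd (hggd2 0)
      (by simp [gg]) (by simp [hgg'def])
    rw [hc] at this
    norm_num at this
    exact this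
  have hs2 : Tendsto (fun s : ℝ => s ^ 2) (𝓝[≠] (0:ℝ)) (𝓝 0) := by
    have : Tendsto (fun s : ℝ => s ^ 2) (𝓝 0) (𝓝 0) := by
      simpa using ((continuous_pow 2).tendsto (0:ℝ))
    exact this.mono_left nhdsWithin_le_nhds
  -- assemble
  have hT : Tendsto (fun s : ℝ =>
      -(3 / (4 * π)) * (ff γ t s / s ^ 2 / (gg γ t s / s ^ 2))
        + 1 / (2 * π) * ((ff γ t s / s ^ 2) ^ 3 / (gg γ t s / s ^ 2) ^ 2) * s ^ 2)
      (𝓝[≠] (0:ℝ))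
      (𝓝 (-(3 / (4 * π)) * (-(curv γ t) / 2 / 1)
        + 1 / (2 * π) * ((-(curv γ t) / 2) ^ 3 / 1 ^ 2) * 0)) := by
    exact (((hA.div hB one_ne_zero).const_mul _)).add
      ((((hA.pow 3).div (hB.pow 2) (by norm_num)).const_mul _).mul hs2)
  have hval : -(3 / (4 * π)) * (-(curv γ t) / 2 / 1)
      + 1 / (2 * π) * ((-(curv γ t) / 2) ^ 3 / 1 ^ 2) * 0 = 3 * curv γ t / (8 * π) := by
    rw [mul_zero, add_zero, div_one]
    field_simp
    ring
  rw [hval] at hT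
  refine hT.congr' ?_
  filter_upwards [self_mem_nhdsWithin] with s hs
  have hs0 : (s : ℝ) ≠ 0 := hs
  have hs2' : (s : ℝ) ^ 2 ≠ 0 := pow_ne_zero 2 hs0
  have hGB : GB_ny_ny_ny γ (γ t) (t + s)
      = -(3 / (4 * π)) * ff γ t s / gg γ t s
        + 1 / (2 * π) * (ff γ t s) ^ 3 / (gg γ t s) ^ 2 := by
    simp only [GB_ny_ny_ny, dot2, nor, ff, gg, Prod.fst_sub, Prod.snd_sub]
  rw [hGB]
  rcases eq_or_ne (gg γ t s) 0 with h | h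
  · simp [h]
  · field_simp
end
end

section
/- Let ν ∈ ℝ. For every t ∈ ℝ, the function s ↦ [ G^B_{n_x n_x n_x τ_y} + (2−ν) G^B_{n_x τ_x τ_x τ_y} + (1−ν)κ(t)·( G^B_{τ_x τ_x τ_y} − G^B_{n_x n_x τ_y} ) ](γ(t), γ(t+s)), defined for small s ≠ 0 (with x-derivatives in the directions n(t), τ(t) and y-derivative in the direction τ(t+s)), has a finite limit as s → 0; in particular the 1/s singularities of the last two terms cancel. -/
open Real Filter Topology MeasureTheory

noncomputable section

/-- The biharmonic Green's function `G^B(x,y) = (1/(8π))‖x−y‖² log‖x−y‖`. -/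
def GB (x y : ℝ × ℝ) : ℝ :=
  1 / (8 * π) * dot2 (x - y) (x - y) * Real.log (Real.sqrt (dot2 (x - y) (x - y)))

/-- Directional derivative in the first argument, in the direction `v`. -/
def ddx (v : ℝ × ℝ) (f : ℝ × ℝ → ℝ × ℝ → ℝ) (x y : ℝ × ℝ) : ℝ :=
  deriv (fun e : ℝ => f (x + e • v) y) 0

/-- Directional derivative in the second argument, in the direction `v`. -/
def ddy (v : ℝ × ℝ) (f : ℝ × ℝ → ℝ × ℝ → ℝ) (x y : ℝ × ℝ) : ℝ :=
  deriv (fun e : ℝ => f x (y + e • v)) 0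

/-! ### Auxiliary lemmas -/

section Aux

lemma smooth_diffE {E : Type*} [NormedAddCommGroup E] [NormedSpace ℝ E] {f : ℝ → E}
    (hf : ContDiff ℝ (⊤:ℕ∞) f) : Differentiable ℝ f :=
  hf.differentiable (by simp)

lemma smooth_derivE {E : Type*} [NormedAddCommGroup E] [NormedSpace ℝ E] {f : ℝ → E}
    (hf : ContDiff ℝ (⊤:ℕ∞) f) : ContDiff ℝ (⊤:ℕ∞) (deriv f) :=
  (contDiff_infty_iff_deriv.mp hf).2

lemma q2lim {f : ℝ → ℝ} (hf : ContDiff ℝ (⊤:ℕ∞) f) (h0 : f 0 = 0) (h1 : deriv f 0 = 0) :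
    Tendsto (fun s => f s / s ^ 2) (𝓝[≠] (0:ℝ)) (𝓝 (deriv (deriv f) 0 / 2)) := by
  have hdf : ContDiff ℝ (⊤:ℕ∞) (deriv f) := smooth_derivE hf
  have hslope : Tendsto (fun s => deriv f s / (2 * s)) (𝓝[≠] (0:ℝ)) (𝓝 (deriv (deriv f) 0 / 2)) := by
    have h : Tendsto (slope (deriv f) 0) (𝓝[≠] (0:ℝ)) (𝓝 (deriv (deriv f) 0)) :=
      hasDerivAt_iff_tendsto_slope.mp (smooth_diffE hdf 0).hasDerivAt
    refine (h.div_const 2).congr' ?_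
    filter_upwards [self_mem_nhdsWithin] with s hs
    simp only [Set.mem_compl_iff, Set.mem_singleton_iff] at hs
    rw [slope_def_field]
    rw [h1]
    rw [sub_zero, sub_zero, div_div]
    ring_nf
  refine HasDerivAt.lhopital_zero_nhdsNE (f' := deriv f) (g' := fun s => 2*s) ?_ ?_ ?_ ?_ ?_ hslope
  · filter_upwards with s using (smooth_diffE hf s).hasDerivAt
  · filter_upwards with s
    have := (hasDerivAt_pow 2 s)
    simpa using this
  · filter_upwards [self_mem_nhdsWithin] with s hs
    simp only [Set.mem_compl_iff, Set.mem_singleton_iff] at hs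
    simpa using hs
  · have := (hf.continuous.tendsto 0); rw [h0] at this
    exact this.mono_left nhdsWithin_le_nhds
  · have : Tendsto (fun s:ℝ => s^2) (𝓝 0) (𝓝 0) := by
      simpa using (continuous_pow 2).tendsto (0:ℝ)
    exact this.mono_left nhdsWithin_le_nhds

lemma q3lim {f : ℝ → ℝ} (hf : ContDiff ℝ (⊤:ℕ∞) f) (h0 : f 0 = 0) (h1 : deriv f 0 = 0)
    (h2 : deriv (deriv f) 0 = 0) :
    Tendsto (fun s => f s / s ^ 3) (𝓝[≠] (0:ℝ))
      (𝓝 (deriv (deriv (deriv f)) 0 / 6)) := by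
  have hdf : ContDiff ℝ (⊤:ℕ∞) (deriv f) := smooth_derivE hf
  have hslope : Tendsto (fun s => deriv f s / (3 * s ^ 2)) (𝓝[≠] (0:ℝ))
      (𝓝 (deriv (deriv (deriv f)) 0 / 6)) := by
    have h := (q2lim hdf h1 h2).div_const 3
    rw [show deriv (deriv (deriv f)) 0 / 2 / 3 = deriv (deriv (deriv f)) 0 / 6 by ring] at h
    refine h.congr ?_
    intro s
    rw [div_div]
    ring_nf
  refine HasDerivAt.lhopital_zero_nhdsNE (f' := deriv f) (g' := fun s => 3*s^2) ?_ ?_ ?_ ?_ ?_ hslope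
  · filter_upwards with s using (smooth_diffE hf s).hasDerivAt
  · filter_upwards with s
    have := (hasDerivAt_pow 3 s)
    simpa using this
  · filter_upwards [self_mem_nhdsWithin] with s hs
    simp only [Set.mem_compl_iff, Set.mem_singleton_iff] at hs
    simp [pow_eq_zero_iff, hs]
  · have := (hf.continuous.tendsto 0); rw [h0] at this
    exact this.mono_left nhdsWithin_le_nhds
  · have : Tendsto (fun s:ℝ => s^3) (𝓝 0) (𝓝 0) := by
      simpa using (continuous_pow 3).tendsto (0:ℝ)
    exact this.mono_left nhdsWithin_le_nhds

/-- Hadamard quotient `f s / s`, extended by `a = f'(0)`, has a derivative at `0`. -/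
lemma had1 {f : ℝ → ℝ} (hf : ContDiff ℝ (⊤:ℕ∞) f) (h0 : f 0 = 0) {a : ℝ}
    (h1 : deriv f 0 = a) :
    ∃ d, HasDerivAt (fun s => if s = 0 then a else f s / s) d 0 := by
  set F : ℝ → ℝ := fun s => f s - a * s with hF
  have hFs : ContDiff ℝ (⊤:ℕ∞) F := hf.sub (contDiff_const.mul contDiff_id)
  have hF0 : F 0 = 0 := by simp [hF, h0]
  have hF1 : deriv F 0 = 0 := by
    have : HasDerivAt F (deriv f 0 - a) 0 :=
      ((smooth_diffE hf 0).hasDerivAt).sub (by simpa using (hasDerivAt_id (0:ℝ)).const_mul a)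
    rw [this.deriv, h1, sub_self]
  refine ⟨deriv (deriv F) 0 / 2, ?_⟩
  rw [hasDerivAt_iff_tendsto_slope]
  refine (q2lim hFs hF0 hF1).congr' ?_
  filter_upwards [self_mem_nhdsWithin] with s hs
  simp only [Set.mem_compl_iff, Set.mem_singleton_iff] at hs
  rw [slope_def_field]
  simp only [if_pos rfl, if_neg hs, hF]
  field_simp
  simp only [↓reduceIte]
  ring

/-- Hadamard quotient `f s / s^2`, extended by `b = f''(0)/2`. -/
lemma had2 {f : ℝ → ℝ} (hf : ContDiff ℝ (⊤:ℕ∞) f) (h0 : f 0 = 0)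
    (h1 : deriv f 0 = 0) {b : ℝ} (h2 : deriv (deriv f) 0 = 2 * b) :
    ∃ d, HasDerivAt (fun s => if s = 0 then b else f s / s ^ 2) d 0 := by
  set F : ℝ → ℝ := fun s => f s - b * s ^ 2 with hF
  have hFs : ContDiff ℝ (⊤:ℕ∞) F := hf.sub (contDiff_const.mul (contDiff_id.pow 2))
  have hF0 : F 0 = 0 := by simp [hF, h0]
  have hq : ∀ s, HasDerivAt (fun u : ℝ => b * u ^ 2) (2 * b * s) s := by
    intro s
    have := (hasDerivAt_pow 2 s).const_mul b
    simpa using this.congr_deriv (by ring)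
  have hFd : ∀ s, deriv F s = deriv f s - 2 * b * s := by
    intro s
    exact (((smooth_diffE hf s).hasDerivAt).sub (hq s)).deriv
  have hF1 : deriv F 0 = 0 := by rw [hFd, h1]; ring
  have hF2 : deriv (deriv F) 0 = 0 := by
    have hdF : deriv F = fun s => deriv f s - 2 * b * s := funext hFd
    rw [hdF]
    have : HasDerivAt (fun s => deriv f s - 2 * b * s)
        (deriv (deriv f) 0 - 2 * b) 0 :=
      ((smooth_diffE (smooth_derivE hf) 0).hasDerivAt).sub
        (((hasDerivAt_id (0:ℝ)).const_mul (2*b)).congr_deriv (by ring))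
    rw [this.deriv, h2, sub_self]
  refine ⟨deriv (deriv (deriv F)) 0 / 6, ?_⟩
  rw [hasDerivAt_iff_tendsto_slope]
  refine (q3lim hFs hF0 hF1 hF2).congr' ?_
  filter_upwards [self_mem_nhdsWithin] with s hs
  simp only [Set.mem_compl_iff, Set.mem_singleton_iff] at hs
  rw [slope_def_field]
  simp only [if_pos rfl, if_neg hs, hF]
  field_simp
  simp only [↓reduceIte]
  ring

/-! ### dot2 algebra -/

lemma dot2_self_nonneg (u : ℝ × ℝ) : 0 ≤ dot2 u u := by
  simp only [dot2]; nlinarith [mul_self_nonneg u.1, mul_self_nonneg u.2]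

lemma dot2_self_pos {u : ℝ × ℝ} (hu : u ≠ 0) : 0 < dot2 u u := by
  have h1 : u.1 ≠ 0 ∨ u.2 ≠ 0 := by
    by_contra h; push_neg at h; exact hu (Prod.ext h.1 h.2)
  simp only [dot2]
  rcases h1 with h | h <;>
    nlinarith [mul_self_nonneg u.1, mul_self_nonneg u.2, mul_self_pos.mpr h]

lemma dot2_self_ne {u : ℝ × ℝ} (hu : u ≠ 0) : dot2 u u ≠ 0 := (dot2_self_pos hu).ne'

lemma dot2_comm (u w : ℝ × ℝ) : dot2 u w = dot2 w u := by simp [dot2]; ring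

lemma dot2_neg_right (u w : ℝ × ℝ) : dot2 u (-w) = -dot2 u w := by
  simp [dot2]; ring

lemma dot2_neg_left (u w : ℝ × ℝ) : dot2 (-u) w = -dot2 u w := by
  simp [dot2]; ring

lemma dot2_zero_left (w : ℝ × ℝ) : dot2 0 w = 0 := by simp [dot2]

lemma dot2_add_smul (u v w : ℝ × ℝ) (e : ℝ) :
    dot2 (u + e • v) w = dot2 u w + e * dot2 v w := by
  simp only [dot2, Prod.fst_add, Prod.snd_add, Prod.smul_fst, Prod.smul_snd, smul_eq_mul]
  ring

lemma dot2_Q (u v : ℝ × ℝ) (e : ℝ) :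
    dot2 (u + e • v) (u + e • v) = dot2 u u + e * (2 * dot2 u v) + e ^ 2 * dot2 v v := by
  simp only [dot2, Prod.fst_add, Prod.snd_add, Prod.smul_fst, Prod.smul_snd, smul_eq_mul]
  ring

/-- orthonormal frame facts, `p` a unit vector, `(p.2, -p.1)` its normal -/
lemma frame_nn {p : ℝ × ℝ} (hp : dot2 p p = 1) : dot2 (p.2, -p.1) (p.2, -p.1) = 1 := by
  simp only [dot2] at *; nlinarith [hp]

lemma frame_pn (p : ℝ × ℝ) : dot2 p (p.2, -p.1) = 0 := by
  simp only [dot2]; ring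

lemma frame_np (p : ℝ × ℝ) : dot2 (p.2, -p.1) p = 0 := by
  simp only [dot2]; ring

lemma frame_decomp {p : ℝ × ℝ} (hp : dot2 p p = 1) (u w : ℝ × ℝ) :
    dot2 u w = dot2 u p * dot2 p w + dot2 u (p.2, -p.1) * dot2 (p.2, -p.1) w := by
  simp only [dot2] at *
  linear_combination (-(u.1*w.1+u.2*w.2)) * hp

lemma frame_normsq {p : ℝ × ℝ} (hp : dot2 p p = 1) (u : ℝ × ℝ) :
    dot2 u u = (dot2 u p) ^ 2 + (dot2 u (p.2, -p.1)) ^ 2 := by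
  simp only [dot2] at *
  linear_combination (-(u.1*u.1+u.2*u.2)) * hp

/-! ### derivatives of dot products -/

lemma hasDerivAt_dot2 {f : ℝ → ℝ × ℝ} {f' : ℝ × ℝ} {s : ℝ} (c : ℝ × ℝ)
    (hf : HasDerivAt f f' s) :
    HasDerivAt (fun s => dot2 (f s) c) (dot2 f' c) s := by
  have h1 : HasDerivAt (fun s => (f s).1) f'.1 s :=
    (ContinuousLinearMap.fst ℝ ℝ ℝ).hasFDerivAt.comp_hasDerivAt s hf
  have h2 : HasDerivAt (fun s => (f s).2) f'.2 s :=
    (ContinuousLinearMap.snd ℝ ℝ ℝ).hasFDerivAt.comp_hasDerivAt s hf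
  have := (h1.mul_const c.1).add (h2.mul_const c.2)
  simp only [dot2]
  exact this

lemma hasDerivAt_dot2_left {f : ℝ → ℝ × ℝ} {f' : ℝ × ℝ} {s : ℝ} (c : ℝ × ℝ)
    (hf : HasDerivAt f f' s) :
    HasDerivAt (fun s => dot2 c (f s)) (dot2 c f') s := by
  have h1 : HasDerivAt (fun s => (f s).1) f'.1 s :=
    (ContinuousLinearMap.fst ℝ ℝ ℝ).hasFDerivAt.comp_hasDerivAt s hf
  have h2 : HasDerivAt (fun s => (f s).2) f'.2 s :=
    (ContinuousLinearMap.snd ℝ ℝ ℝ).hasFDerivAt.comp_hasDerivAt s hf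
  have := (h1.const_mul c.1).add (h2.const_mul c.2)
  simp only [dot2]
  exact this

lemma smooth_dot2 (c : ℝ × ℝ) {f : ℝ → ℝ × ℝ} (hf : ContDiff ℝ (⊤:ℕ∞) f) :
    ContDiff ℝ (⊤:ℕ∞) (fun s => dot2 (f s) c) := by
  simp only [dot2]
  exact ((contDiff_fst.comp hf).mul contDiff_const).add
    ((contDiff_snd.comp hf).mul contDiff_const)

lemma smooth_dot2_left (c : ℝ × ℝ) {f : ℝ → ℝ × ℝ} (hf : ContDiff ℝ (⊤:ℕ∞) f) :
    ContDiff ℝ (⊤:ℕ∞) (fun s => dot2 c (f s)) := by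
  simp only [dot2]
  exact (contDiff_const.mul (contDiff_fst.comp hf)).add
    (contDiff_const.mul (contDiff_snd.comp hf))

lemma hadA (u v w : ℝ × ℝ) : HasDerivAt (fun e : ℝ => dot2 (u + e • v) w) (dot2 v w) 0 := by
  have h : HasDerivAt (fun e : ℝ => dot2 u w + e * dot2 v w) (dot2 v w) 0 := by
    simpa using ((hasDerivAt_id (0:ℝ)).mul_const (dot2 v w)).const_add (dot2 u w)
  exact h.congr_of_eventuallyEq (Eventually.of_forall fun e => (dot2_add_smul u v w e))

lemma hadQ (u v : ℝ × ℝ) :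
    HasDerivAt (fun e : ℝ => dot2 (u + e • v) (u + e • v)) (2 * dot2 u v) 0 := by
  have h : HasDerivAt (fun e : ℝ => dot2 u u + e * (2 * dot2 u v) + e ^ 2 * dot2 v v)
      (2 * dot2 u v) 0 := by
    have h1 : HasDerivAt (fun e : ℝ => dot2 u u + e * (2 * dot2 u v)) (2 * dot2 u v) 0 := by
      simpa using ((hasDerivAt_id (0:ℝ)).mul_const (2 * dot2 u v)).const_add (dot2 u u)
    have h2 : HasDerivAt (fun e : ℝ => e ^ 2 * dot2 v v) 0 0 := by
      simpa using (hasDerivAt_pow 2 (0:ℝ)).mul_const (dot2 v v)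
    simpa using h1.fun_add h2
  exact h.congr_of_eventuallyEq (Eventually.of_forall fun e => (dot2_Q u v e))

/-! ### explicit iterated directional derivatives of `GB` -/

def g1 (w u : ℝ × ℝ) : ℝ := -(1/(8*π)) * (dot2 u w * (Real.log (dot2 u u) + 1))

def g2 (v w u : ℝ × ℝ) : ℝ :=
  -(1/(8*π)) * (dot2 v w * (Real.log (dot2 u u) + 1)
    + 2 * dot2 u w * dot2 u v / dot2 u u)

def g3 (z v w u : ℝ × ℝ) : ℝ :=
  -(1/(8*π)) * (2 * (dot2 v w * dot2 u z + dot2 z w * dot2 u v + dot2 u w * dot2 z v) / dot2 u u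
    - 4 * dot2 u w * dot2 u v * dot2 u z / (dot2 u u) ^ 2)

def g4 (a z v w u : ℝ × ℝ) : ℝ :=
  -(1/(8*π)) * (2 * (dot2 v w * dot2 a z + dot2 z w * dot2 a v + dot2 a w * dot2 z v) / dot2 u u
    - 4 * ((dot2 v w * dot2 u z + dot2 z w * dot2 u v + dot2 u w * dot2 z v) * dot2 u a
        + dot2 a w * dot2 u v * dot2 u z + dot2 u w * dot2 a v * dot2 u z
        + dot2 u w * dot2 u v * dot2 a z) / (dot2 u u) ^ 2
    + 16 * dot2 u w * dot2 u v * dot2 u z * dot2 u a / (dot2 u u) ^ 3)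

lemma L1 {u : ℝ × ℝ} (hu : u ≠ 0) (v : ℝ × ℝ) :
    HasDerivAt (fun e : ℝ => 1/(16*π) *
        (dot2 (u + e • v) (u + e • v) * Real.log (dot2 (u + e • v) (u + e • v))))
      (-(g1 v u)) 0 := by
  have hq := hadQ u v
  have hne : dot2 u u ≠ 0 := dot2_self_ne hu
  have hlog : HasDerivAt (fun e : ℝ => Real.log (dot2 (u + e • v) (u + e • v)))
      (2 * dot2 u v / dot2 u u) 0 := by
    have := hq.log (by simpa using hne)
    simpa using this
  have h := (hq.mul hlog).const_mul (1/(16*π))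
  simp only [zero_smul, add_zero] at h
  refine h.congr_deriv ?_
  have hπ : π ≠ 0 := Real.pi_ne_zero
  simp only [g1]
  field_simp
  ring

lemma L2 {u : ℝ × ℝ} (hu : u ≠ 0) (v w : ℝ × ℝ) :
    HasDerivAt (fun e : ℝ => g1 w (u + e • v)) (g2 v w u) 0 := by
  have hne : dot2 u u ≠ 0 := dot2_self_ne hu
  have hlog : HasDerivAt (fun e : ℝ => Real.log (dot2 (u + e • v) (u + e • v)))
      (2 * dot2 u v / dot2 u u) 0 := by
    have := (hadQ u v).log (by simpa using hne)
    simpa using this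
  have h := ((hadA u v w).mul (hlog.add_const 1)).const_mul (-(1/(8*π)))
  simp only [zero_smul, add_zero] at h
  refine h.congr_deriv ?_
  · simp only [g2]
    have hπ : π ≠ 0 := Real.pi_ne_zero
    field_simp

lemma L3 {u : ℝ × ℝ} (hu : u ≠ 0) (a v w : ℝ × ℝ) :
    HasDerivAt (fun e : ℝ => g2 v w (u + e • a)) (g3 a v w u) 0 := by
  have hne : dot2 u u ≠ 0 := dot2_self_ne hu
  have hx : dot2 (u + (0:ℝ) • a) (u + (0:ℝ) • a) ≠ 0 := by simpa using hne
  have hlog : HasDerivAt (fun e : ℝ => Real.log (dot2 (u + e • a) (u + e • a)))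
      (2 * dot2 u a / dot2 u u) 0 := by
    have := (hadQ u a).log (by simpa using hne)
    simpa using this
  have part1 := (hlog.add_const 1).const_mul (dot2 v w)
  have part2 := (((hadA u a w).const_mul 2).mul (hadA u a v)).div (hadQ u a) hx
  have h := (part1.add part2).const_mul (-(1/(8*π)))
  simp only [zero_smul, add_zero, Pi.mul_apply, Pi.div_apply, Pi.add_apply, Pi.pow_apply] at h
  refine h.congr_deriv ?_
  · simp only [g3]
    have hπ : π ≠ 0 := Real.pi_ne_zero
    field_simp
    ring

lemma L4 {u : ℝ × ℝ} (hu : u ≠ 0) (a z v w : ℝ × ℝ) :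
    HasDerivAt (fun e : ℝ => g3 z v w (u + e • a)) (g4 a z v w u) 0 := by
  have hne : dot2 u u ≠ 0 := dot2_self_ne hu
  have hx : dot2 (u + (0:ℝ) • a) (u + (0:ℝ) • a) ≠ 0 := by simpa using hne
  have hx2 : dot2 (u + (0:ℝ) • a) (u + (0:ℝ) • a) ^ 2 ≠ 0 := pow_ne_zero _ hx
  have s1 := (hadA u a z).const_mul (dot2 v w)
  have s2 := (hadA u a v).const_mul (dot2 z w)
  have s3 := (hadA u a w).mul_const (dot2 z v)
  have hT1 := (((s1.add s2).add s3).const_mul 2).div (hadQ u a) hx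
  have hT2num := (((hadA u a w).const_mul 4).mul (hadA u a v)).mul (hadA u a z)
  have hq2 := (hadQ u a).pow 2
  have hT2 := hT2num.div hq2 hx2
  have h := (hT1.sub hT2).const_mul (-(1/(8*π)))
  simp only [zero_smul, add_zero, Pi.mul_apply, Pi.div_apply, Pi.add_apply, Pi.pow_apply] at h
  refine h.congr_deriv ?_
  · simp only [g4]
    have hπ : π ≠ 0 := Real.pi_ne_zero
    field_simp
    ring

lemma eventually_ne_shift {x y v : ℝ × ℝ} (h : x ≠ y) :
    ∀ᶠ e : ℝ in 𝓝 0, x + e • v ≠ y := by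
  have hc : ContinuousAt (fun e : ℝ => x + e • v) 0 := by fun_prop
  have h0 : x + (0:ℝ) • v = x := by simp
  have hc' : Tendsto (fun e : ℝ => x + e • v) (𝓝 0) (𝓝 x) := by
    simpa [h0] using hc.tendsto
  exact hc' (compl_singleton_mem_nhds h)

lemma shift_sub (x y v : ℝ × ℝ) (e : ℝ) : (x + e • v) - y = (x - y) + e • v := by abel

lemma ddy_GB {x y : ℝ × ℝ} (h : x ≠ y) (w : ℝ × ℝ) : ddy w GB x y = g1 w (x - y) := by
  have hu : x - y ≠ 0 := sub_ne_zero.mpr h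
  have key : (fun e : ℝ => GB x (y + e • w)) = (fun e : ℝ => 1/(16*π) *
      (dot2 ((x-y) + e • (-w)) ((x-y) + e • (-w)) *
        Real.log (dot2 ((x-y) + e • (-w)) ((x-y) + e • (-w))))) := by
    funext e
    have hxy : x - (y + e • w) = (x - y) + e • (-w) := by
      simp only [smul_neg]; abel
    rw [GB, hxy, Real.log_sqrt (dot2_self_nonneg _)]
    ring
  rw [ddy, key, (L1 hu (-w)).deriv]
  simp only [g1, dot2_neg_right]
  ring

lemma ddx1_GB {x y : ℝ × ℝ} (h : x ≠ y) (v w : ℝ × ℝ) :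
    ddx v (ddy w GB) x y = g2 v w (x - y) := by
  have hu : x - y ≠ 0 := sub_ne_zero.mpr h
  have heq : (fun e : ℝ => ddy w GB (x + e • v) y) =ᶠ[𝓝 (0:ℝ)]
      (fun e : ℝ => g1 w ((x - y) + e • v)) := by
    filter_upwards [eventually_ne_shift (v := v) h] with e he
    rw [ddy_GB he w, shift_sub]
  rw [ddx, heq.deriv_eq, (L2 hu v w).deriv]

lemma ddx2_GB {x y : ℝ × ℝ} (h : x ≠ y) (z v w : ℝ × ℝ) :
    ddx z (ddx v (ddy w GB)) x y = g3 z v w (x - y) := by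
  have hu : x - y ≠ 0 := sub_ne_zero.mpr h
  have heq : (fun e : ℝ => ddx v (ddy w GB) (x + e • z) y) =ᶠ[𝓝 (0:ℝ)]
      (fun e : ℝ => g2 v w ((x - y) + e • z)) := by
    filter_upwards [eventually_ne_shift (v := z) h] with e he
    rw [ddx1_GB he v w, shift_sub]
  rw [ddx, heq.deriv_eq, (L3 hu z v w).deriv]

lemma ddx3_GB {x y : ℝ × ℝ} (h : x ≠ y) (a z v w : ℝ × ℝ) :
    ddx a (ddx z (ddx v (ddy w GB))) x y = g4 a z v w (x - y) := by
  have hu : x - y ≠ 0 := sub_ne_zero.mpr h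
  have heq : (fun e : ℝ => ddx z (ddx v (ddy w GB)) (x + e • a) y) =ᶠ[𝓝 (0:ℝ)]
      (fun e : ℝ => g3 z v w ((x - y) + e • a)) := by
    filter_upwards [eventually_ne_shift (v := a) h] with e he
    rw [ddx2_GB he z v w, shift_sub]
  rw [ddx, heq.deriv_eq, (L4 hu a z v w).deriv]

end Aux

set_option maxHeartbeats 1000000 in
lemma key_ident (s lam mm T W κ ν : ℝ) (hs : s ≠ 0)
    (hR : lam ^ 2 + s ^ 2 * mm ^ 2 ≠ 0) :
    -(6 * (1 / (8 * π)) * W / (lam ^ 2 + s ^ 2 * mm ^ 2) -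
                12 * (1 / (8 * π)) * (s ^ 2 * W * mm ^ 2 + mm * (lam * T + s ^ 2 * mm * W)) /
                  (lam ^ 2 + s ^ 2 * mm ^ 2) ^ 2 +
              16 * (1 / (8 * π)) * s ^ 2 * (lam * T + s ^ 2 * mm * W) * mm ^ 3 /
                (lam ^ 2 + s ^ 2 * mm ^ 2) ^ 3 +
            (2 - ν) *
              (2 * (1 / (8 * π)) * W / (lam ^ 2 + s ^ 2 * mm ^ 2) -
                  4 * (1 / (8 * π)) * (2 * T * lam * mm + (lam * T + s ^ 2 * mm * W) * mm + W * lam ^ 2) /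
                    (lam ^ 2 + s ^ 2 * mm ^ 2) ^ 2 +
                16 * (1 / (8 * π)) * (lam * T + s ^ 2 * mm * W) * lam ^ 2 * mm /
                  (lam ^ 2 + s ^ 2 * mm ^ 2) ^ 3) +
          (1 - ν) * κ *
            (2 * (1 / (8 * π)) * (2 * T * lam + (lam * T + s ^ 2 * mm * W)) / (lam ^ 2 + s ^ 2 * mm ^ 2) -
                4 * (1 / (8 * π)) * (lam * T + s ^ 2 * mm * W) * lam ^ 2 / (lam ^ 2 + s ^ 2 * mm ^ 2) ^ 2 -
              (2 * (1 / (8 * π)) * (2 * s ^ 2 * W * mm + (lam * T + s ^ 2 * mm * W)) /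
                  (lam ^ 2 + s ^ 2 * mm ^ 2) -
                4 * (1 / (8 * π)) * s ^ 2 * (lam * T + s ^ 2 * mm * W) * mm ^ 2 /
                  (lam ^ 2 + s ^ 2 * mm ^ 2) ^ 2))) /
      s =
    -(1 / (8 * π)) *
          (2 * (s * W * 1 + s * W * 1 + s * W * 1) / (s ^ 2 * (lam ^ 2 + s ^ 2 * mm ^ 2)) -
              4 *
                  ((s * W * (s ^ 2 * mm) + s * W * (s ^ 2 * mm) +
                            (s * lam * T + s ^ 2 * mm * (s * W)) * 1) *
                          (s ^ 2 * mm) +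
                        s * W * (s ^ 2 * mm) * (s ^ 2 * mm) +
                      (s * lam * T + s ^ 2 * mm * (s * W)) * 1 * (s ^ 2 * mm) +
                    (s * lam * T + s ^ 2 * mm * (s * W)) * (s ^ 2 * mm) * 1) /
                (s ^ 2 * (lam ^ 2 + s ^ 2 * mm ^ 2)) ^ 2 +
            16 * (s * lam * T + s ^ 2 * mm * (s * W)) * (s ^ 2 * mm) * (s ^ 2 * mm) * (s ^ 2 * mm) /
              (s ^ 2 * (lam ^ 2 + s ^ 2 * mm ^ 2)) ^ 3) +
        (2 - ν) *
          (-(1 / (8 * π)) *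
            (2 * (T * 0 + T * 0 + s * W * 1) / (s ^ 2 * (lam ^ 2 + s ^ 2 * mm ^ 2)) -
                4 *
                    ((T * (s * lam) + T * (s * lam) + (s * lam * T + s ^ 2 * mm * (s * W)) * 1) *
                            (s ^ 2 * mm) +
                          s * W * (s * lam) * (s * lam) +
                        (s * lam * T + s ^ 2 * mm * (s * W)) * 0 * (s * lam) +
                      (s * lam * T + s ^ 2 * mm * (s * W)) * (s * lam) * 0) /
                  (s ^ 2 * (lam ^ 2 + s ^ 2 * mm ^ 2)) ^ 2 +
              16 * (s * lam * T + s ^ 2 * mm * (s * W)) * (s * lam) * (s * lam) * (s ^ 2 * mm) /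
                (s ^ 2 * (lam ^ 2 + s ^ 2 * mm ^ 2)) ^ 3)) +
      (1 - ν) * κ *
        (-(1 / (8 * π)) *
            (2 * (T * (s * lam) + T * (s * lam) + (s * lam * T + s ^ 2 * mm * (s * W)) * 1) /
                (s ^ 2 * (lam ^ 2 + s ^ 2 * mm ^ 2)) -
              4 * (s * lam * T + s ^ 2 * mm * (s * W)) * (s * lam) * (s * lam) /
                (s ^ 2 * (lam ^ 2 + s ^ 2 * mm ^ 2)) ^ 2) -
          -(1 / (8 * π)) *
            (2 * (s * W * (s ^ 2 * mm) + s * W * (s ^ 2 * mm) + (s * lam * T + s ^ 2 * mm * (s * W)) * 1) /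
                (s ^ 2 * (lam ^ 2 + s ^ 2 * mm ^ 2)) -
              4 * (s * lam * T + s ^ 2 * mm * (s * W)) * (s ^ 2 * mm) * (s ^ 2 * mm) /
                (s ^ 2 * (lam ^ 2 + s ^ 2 * mm ^ 2)) ^ 2))
 := by
  have hπ : π ≠ 0 := Real.pi_ne_zero
  generalize (1:ℝ)/(8*π) = c8
  field_simp
  ring

theorem stmt9 (L : ℝ) (hL : 0 < L) (γ : ℝ → ℝ × ℝ)
    (hγ : ContDiff ℝ (⊤ : ℕ∞) γ)
    (hper : ∀ s, γ (s + L) = γ s)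
    (hinj : Set.InjOn γ (Set.Ico 0 L))
    (harc : ∀ s, dot2 (deriv γ s) (deriv γ s) = 1)
    (ν : ℝ) (t : ℝ) :
    ∃ c : ℝ,
      Tendsto
        (fun s : ℝ =>
          ddx (nor γ t) (ddx (nor γ t) (ddx (nor γ t)
              (ddy (tang γ (t + s)) GB))) (γ t) (γ (t + s))
            + (2 - ν) * ddx (nor γ t) (ddx (tang γ t) (ddx (tang γ t)
                (ddy (tang γ (t + s)) GB))) (γ t) (γ (t + s))
            + (1 - ν) * curv γ t *
                (ddx (tang γ t) (ddx (tang γ t)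
                    (ddy (tang γ (t + s)) GB)) (γ t) (γ (t + s))
                  - ddx (nor γ t) (ddx (nor γ t)
                      (ddy (tang γ (t + s)) GB)) (γ t) (γ (t + s))))
        (𝓝[≠] (0 : ℝ)) (𝓝 c) := by
  classical
  set τ0 : ℝ × ℝ := tang γ t with hτ0
  set n0 : ℝ × ℝ := nor γ t with hn0
  set κ : ℝ := curv γ t with hκ
  have hτd : τ0 = deriv γ t := hτ0
  have hn0p : n0 = ((deriv γ t).2, -(deriv γ t).1) := hn0
  have hp1 : dot2 (deriv γ t) (deriv γ t) = 1 := harc t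
  -- smoothness
  have hshift : ContDiff ℝ (⊤:ℕ∞) (fun s : ℝ => t + s) := contDiff_const.add contDiff_id
  have hΓ : ContDiff ℝ (⊤:ℕ∞) (fun s => γ (t + s)) := hγ.comp hshift
  have hγder : ContDiff ℝ (⊤:ℕ∞) (deriv γ) := smooth_derivE hγ
  have hΓ' : ContDiff ℝ (⊤:ℕ∞) (fun s => deriv γ (t + s)) := hγder.comp hshift
  -- pointwise derivatives of the shifted curve
  have hΓd : ∀ s, HasDerivAt (fun s => γ (t + s)) (deriv γ (t + s)) s := by
    intro s
    have h1 : HasDerivAt γ (deriv γ (t + s)) (t + s) := (smooth_diffE hγ (t+s)).hasDerivAt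
    have h2 : HasDerivAt (fun s : ℝ => t + s) 1 s := (hasDerivAt_id s).const_add t
    simpa [Function.comp_def] using h1.scomp s h2
  have hΓd2 : ∀ s, HasDerivAt (fun s => deriv γ (t + s)) (deriv (deriv γ) (t + s)) s := by
    intro s
    have h1 : HasDerivAt (deriv γ) (deriv (deriv γ) (t + s)) (t + s) :=
      (smooth_diffE hγder (t+s)).hasDerivAt
    have h2 : HasDerivAt (fun s : ℝ => t + s) 1 s := (hasDerivAt_id s).const_add t
    simpa [Function.comp_def] using h1.scomp s h2
  -- the four scalar functions of s
  have hlsm : ContDiff ℝ (⊤:ℕ∞) (fun s => dot2 (γ t - γ (t + s)) τ0) :=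
    smooth_dot2 τ0 (contDiff_const.sub hΓ)
  have hmsm : ContDiff ℝ (⊤:ℕ∞) (fun s => dot2 (γ t - γ (t + s)) n0) :=
    smooth_dot2 n0 (contDiff_const.sub hΓ)
  have hwsm : ContDiff ℝ (⊤:ℕ∞) (fun s => dot2 n0 (deriv γ (t + s))) :=
    smooth_dot2_left n0 hΓ'
  have hld : ∀ s, HasDerivAt (fun s => dot2 (γ t - γ (t + s)) τ0)
      (-dot2 (deriv γ (t + s)) τ0) s := by
    intro s
    have h2 := hasDerivAt_dot2 τ0 ((hasDerivAt_const s (γ t)).sub (hΓd s))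
    refine h2.congr_deriv ?_
    rw [zero_sub, dot2_neg_left]
  have hmd : ∀ s, HasDerivAt (fun s => dot2 (γ t - γ (t + s)) n0)
      (-dot2 (deriv γ (t + s)) n0) s := by
    intro s
    have h2 := hasDerivAt_dot2 n0 ((hasDerivAt_const s (γ t)).sub (hΓd s))
    refine h2.congr_deriv ?_
    rw [zero_sub, dot2_neg_left]
  have hl0 : (fun s => dot2 (γ t - γ (t + s)) τ0) 0 = 0 := by
    simp [dot2]
  have hm0 : (fun s => dot2 (γ t - γ (t + s)) n0) 0 = 0 := by
    simp [dot2]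
  have hld0 : deriv (fun s => dot2 (γ t - γ (t + s)) τ0) 0 = -1 := by
    rw [(hld 0).deriv, add_zero, hτd, hp1]
  have hmd0 : deriv (fun s => dot2 (γ t - γ (t + s)) n0) 0 = 0 := by
    rw [(hmd 0).deriv, add_zero, hn0p, frame_pn, neg_zero]
  have hmd20 : deriv (deriv (fun s => dot2 (γ t - γ (t + s)) n0)) 0 = 2 * (κ/2) := by
    have hdm_eq : deriv (fun s => dot2 (γ t - γ (t + s)) n0)
        = fun s => -dot2 (deriv γ (t + s)) n0 := funext fun s => (hmd s).deriv
    rw [hdm_eq]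
    have h3 : HasDerivAt (fun s => -dot2 (deriv γ (t + s)) n0)
        (-dot2 (deriv (deriv γ) (t + 0)) n0) 0 := (hasDerivAt_dot2 n0 (hΓd2 0)).neg
    rw [h3.deriv, add_zero, hκ, hn0]
    simp only [curv]
    ring
  have hw00 : (fun s => dot2 n0 (deriv γ (t + s))) 0 = 0 := by
    simp only [add_zero, hn0p]
    rw [frame_np]
  have hwd0 : deriv (fun s => dot2 n0 (deriv γ (t + s))) 0 = -κ := by
    rw [(hasDerivAt_dot2_left n0 (hΓd2 0)).deriv, add_zero, hκ, hn0]
    simp only [curv, nor]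
    rw [dot2_comm]
    ring
  -- quotient functions
  obtain ⟨dΛ, hΛ0⟩ := had1 hlsm hl0 hld0
  obtain ⟨dM, hM0⟩ := had2 hmsm hm0 hmd0 hmd20
  obtain ⟨dW, hW0⟩ := had1 hwsm hw00 hwd0
  set Λ : ℝ → ℝ := fun s => if s = 0 then -1 else dot2 (γ t - γ (t + s)) τ0 / s with hΛdef
  set M : ℝ → ℝ := fun s => if s = 0 then κ/2 else dot2 (γ t - γ (t + s)) n0 / s ^ 2 with hMdef
  set W : ℝ → ℝ := fun s => if s = 0 then -κ else dot2 n0 (deriv γ (t + s)) / s with hWdef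
  set Tf : ℝ → ℝ := fun s => dot2 τ0 (deriv γ (t + s)) with hTdef
  have hΛd : DifferentiableAt ℝ Λ 0 := hΛ0.differentiableAt
  have hMd : DifferentiableAt ℝ M 0 := hM0.differentiableAt
  have hWd : DifferentiableAt ℝ W 0 := hW0.differentiableAt
  have hTfd : DifferentiableAt ℝ Tf 0 := by
    rw [hTdef]
    exact (hasDerivAt_dot2_left τ0 (hΓd2 0)).differentiableAt
  -- values at 0
  have hΛv : Λ 0 = -1 := by rw [hΛdef]; simp
  have hMv : M 0 = κ/2 := by rw [hMdef]; simp
  have hWv : W 0 = -κ := by rw [hWdef]; simp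
  have hTv : Tf 0 = 1 := by rw [hTdef]; simp only [add_zero, hτd]; exact hp1
  -- auxiliary rational functions
  set Rf : ℝ → ℝ := fun s => (Λ s) ^ 2 + s ^ 2 * (M s) ^ 2 with hRdef
  set Pf : ℝ → ℝ := fun s => Λ s * Tf s + s ^ 2 * M s * W s with hPdef
  have hRv : Rf 0 = 1 := by rw [hRdef]; simp [hΛv]
  have hRne : Rf 0 ≠ 0 := by rw [hRv]; norm_num
  have hRdiff : DifferentiableAt ℝ Rf 0 := by
    rw [hRdef]
    exact (hΛd.pow 2).add ((differentiableAt_fun_id.pow 2).mul (hMd.pow 2))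
  have hPdiff : DifferentiableAt ℝ Pf 0 := by
    rw [hPdef]
    exact (hΛd.mul hTfd).add (((differentiableAt_fun_id.pow 2).mul hMd).mul hWd)
  set G : ℝ → ℝ := fun s =>
    -((6*(1/(8*π))*W s/(Rf s) - 12*(1/(8*π))*(s^2*W s*(M s)^2 + M s*(Pf s))/(Rf s)^2
        + 16*(1/(8*π))*s^2*(Pf s)*(M s)^3/(Rf s)^3)
      + (2-ν)*(2*(1/(8*π))*W s/(Rf s)
        - 4*(1/(8*π))*(2*Tf s*Λ s*M s + Pf s*M s + W s*(Λ s)^2)/(Rf s)^2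
        + 16*(1/(8*π))*(Pf s)*(Λ s)^2*(M s)/(Rf s)^3)
      + (1-ν)*κ*((2*(1/(8*π))*(2*Tf s*Λ s + Pf s)/(Rf s) - 4*(1/(8*π))*(Pf s)*(Λ s)^2/(Rf s)^2)
        - (2*(1/(8*π))*(2*s^2*W s*M s + Pf s)/(Rf s) - 4*(1/(8*π))*s^2*(Pf s)*(M s)^2/(Rf s)^2)))
    with hGdef
  have hGdiff : DifferentiableAt ℝ G 0 := by
    rw [hGdef]
    fun_prop (disch := first | assumption | exact pow_ne_zero _ hRne)
  have hG0 : G 0 = 0 := by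
    rw [hGdef]
    simp only [hΛv, hMv, hWv, hTv, hRv, hPdef, hΛv, hMv, hWv, hTv]
    norm_num
    ring_nf
  clear_value τ0 n0 κ Λ M W Tf Rf Pf G
  -- the eventual set where everything is nice
  have hlslope : Tendsto (slope (fun s => dot2 (γ t - γ (t + s)) τ0) 0) (𝓝[≠] (0:ℝ))
      (𝓝 (-1)) := by
    refine hasDerivAt_iff_tendsto_slope.mp ?_
    have := hld 0
    refine this.congr_deriv ?_
    rw [add_zero, hτd, hp1]
  have hlne : ∀ᶠ s in 𝓝[≠] (0:ℝ), dot2 (γ t - γ (t + s)) τ0 ≠ 0 := by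
    have h1 := hlslope.eventually_ne (by norm_num : (-1:ℝ) ≠ 0)
    filter_upwards [h1, self_mem_nhdsWithin] with s h1 hs
    simp only [Set.mem_compl_iff, Set.mem_singleton_iff] at hs
    intro hcon
    apply h1
    rw [slope_def_field, hcon]
    simp [dot2]
  -- key eventual identity
  have hkey : ∀ᶠ s in 𝓝[≠] (0:ℝ),
      G s / s =
        ddx n0 (ddx n0 (ddx n0 (ddy (tang γ (t + s)) GB))) (γ t) (γ (t + s))
          + (2 - ν) * ddx n0 (ddx τ0 (ddx τ0 (ddy (tang γ (t + s)) GB))) (γ t) (γ (t + s))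
          + (1 - ν) * κ *
              (ddx τ0 (ddx τ0 (ddy (tang γ (t + s)) GB)) (γ t) (γ (t + s))
                - ddx n0 (ddx n0 (ddy (tang γ (t + s)) GB)) (γ t) (γ (t + s))) := by
    filter_upwards [hlne, self_mem_nhdsWithin] with s hls hs
    simp only [Set.mem_compl_iff, Set.mem_singleton_iff] at hs
    have hu : γ t - γ (t + s) ≠ 0 := by
      intro hcon
      apply hls
      rw [hcon, dot2_zero_left]
    have hxy : γ t ≠ γ (t + s) := sub_ne_zero.mp hu
    rw [ddx3_GB hxy n0 n0 n0 (tang γ (t+s)), ddx3_GB hxy n0 τ0 τ0 (tang γ (t+s)),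
      ddx2_GB hxy τ0 τ0 (tang γ (t+s)), ddx2_GB hxy n0 n0 (tang γ (t+s))]
    -- dot product rewrites
    have e_nn : dot2 n0 n0 = 1 := by rw [hn0p]; exact frame_nn hp1
    have e_ττ : dot2 τ0 τ0 = 1 := by rw [hτd]; exact hp1
    have e_nτ : dot2 n0 τ0 = 0 := by rw [hn0p, hτd]; exact frame_np _
    have e_τn : dot2 τ0 n0 = 0 := by rw [hn0p, hτd]; exact frame_pn _
    have e_uτ : dot2 (γ t - γ (t + s)) τ0 = s * Λ s := by
      rw [hΛdef]
      simp only [if_neg hs]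
      field_simp
    have e_un : dot2 (γ t - γ (t + s)) n0 = s ^ 2 * M s := by
      rw [hMdef]
      simp only [if_neg hs]
      field_simp
    have e_nw : dot2 n0 (tang γ (t + s)) = s * W s := by
      rw [hWdef]
      simp only [if_neg hs, tang]
      field_simp
    have e_τw : dot2 τ0 (tang γ (t + s)) = Tf s := by rw [hTdef]; rfl
    have e_uw : dot2 (γ t - γ (t + s)) (tang γ (t + s))
        = (s * Λ s) * Tf s + (s ^ 2 * M s) * (s * W s) := by
      have := frame_decomp hp1 (γ t - γ (t + s)) (tang γ (t + s))
      rw [this, ← hn0p, ← hτd, e_uτ, e_un, e_nw, e_τw]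
    have e_uu : dot2 (γ t - γ (t + s)) (γ t - γ (t + s)) = s ^ 2 * Rf s := by
      have := frame_normsq hp1 (γ t - γ (t + s))
      rw [this, ← hn0p, ← hτd, e_uτ, e_un, hRdef]
      ring
    have hRsne : Rf s ≠ 0 := by
      intro hcon
      have := dot2_self_ne hu
      rw [e_uu, hcon, mul_zero] at this
      exact this rfl
    simp only [g3, g4, e_uu, e_uw, e_uτ, e_un, e_nw, e_τw, e_nn, e_ττ, e_nτ, e_τn]
    rw [hGdef]
    simp only [hRdef, hPdef]
    have hR' : Λ s ^ 2 + s ^ 2 * M s ^ 2 ≠ 0 := by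
      rw [hRdef] at hRsne
      simpa using hRsne
    exact key_ident s (Λ s) (M s) (Tf s) (W s) κ ν hs hR'
  -- conclusion
  refine ⟨deriv G 0, ?_⟩
  have hGder : HasDerivAt G (deriv G 0) 0 := hGdiff.hasDerivAt
  have hsl : Tendsto (fun s => G s / s) (𝓝[≠] (0:ℝ)) (𝓝 (deriv G 0)) := by
    have h := hasDerivAt_iff_tendsto_slope.mp hGder
    refine h.congr ?_
    intro s
    rw [slope_def_field, hG0, sub_zero, sub_zero]
  exact hsl.congr' hkey
end
end
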